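/- Let K be a standard unconditional convex body in ℝ^n and let i ∈ {1, …, n}. Then μ_i(K)^n · vol(K) ≥ μ_i(P_{n,i})^n · vol(P_{n,i}), and equality holds if and only if K = (1/(2μ_i(K))) · P_{n,i}. -/

import Mathlib

open MeasureTheory Pointwise

/-- The integer lattice `ℤⁿ` viewed as a subset of `ℝⁿ`. -/
def intLattice (n : ℕ) : Set (EuclideanSpace ℝ (Fin n)) :=
  {x | ∀ j, ∃ m : ℤ, x j = (m : ℝ)}

/-- The `i`-th covering minimum `μ_i(K, ℤⁿ)` of a convex body `K ⊆ ℝⁿ`: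
the least `μ > 0` such that `μK + ℤⁿ` meets every `(n-i)`-dimensional affine subspace. -/
noncomputable def covMin (n i : ℕ) (K : Set (EuclideanSpace ℝ (Fin n))) : ℝ :=
  sInf {μ : ℝ | 0 < μ ∧ ∀ L : AffineSubspace ℝ (EuclideanSpace ℝ (Fin n)),
    (L : Set (EuclideanSpace ℝ (Fin n))).Nonempty →
    Module.finrank ℝ L.direction = n - i →
    ((μ • K + intLattice n) ∩ (L : Set (EuclideanSpace ℝ (Fin n)))).Nonempty}

/-- A set `K ⊆ ℝⁿ` is standard unconditional if it is symmetric with respect to every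
coordinate hyperplane, i.e. stable under all sign changes of the coordinates. -/
def StdUnconditional (n : ℕ) (K : Set (EuclideanSpace ℝ (Fin n))) : Prop :=
  ∀ x ∈ K, ∀ ε : Fin n → ℝ, (∀ j, ε j = 1 ∨ ε j = -1) →
    (WithLp.toLp 2 (fun j => ε j * x j) : EuclideanSpace ℝ (Fin n)) ∈ K

/-- The cube `C_n = [-1,1]ⁿ`. -/
def cube (n : ℕ) : Set (EuclideanSpace ℝ (Fin n)) := {x | ∀ j, |x j| ≤ 1}

/-- The crosspolytope `C_n^⋆ = conv{±e_1, …, ±e_n}`. -/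
def crosspolytope (n : ℕ) : Set (EuclideanSpace ℝ (Fin n)) := {x | ∑ j, |x j| ≤ 1}

/-- The polytope `P_{n,i} = C_n ∩ i·C_n^⋆`, interpolating between crosspolytope and cube. -/
noncomputable def Pcc (n i : ℕ) : Set (EuclideanSpace ℝ (Fin n)) :=
  cube n ∩ (i : ℝ) • crosspolytope n

/-- The set of admissible covering parameters. -/
def covSet (n i : ℕ) (K : Set (EuclideanSpace ℝ (Fin n))) : Set ℝ :=
  {μ : ℝ | 0 < μ ∧ ∀ L : AffineSubspace ℝ (EuclideanSpace ℝ (Fin n)),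
    (L : Set (EuclideanSpace ℝ (Fin n))).Nonempty →
    Module.finrank ℝ L.direction = n - i →
    ((μ • K + intLattice n) ∩ (L : Set (EuclideanSpace ℝ (Fin n)))).Nonempty}

lemma covMin_eq_sInf (n i : ℕ) (K : Set (EuclideanSpace ℝ (Fin n))) :
    covMin n i K = sInf (covSet n i K) := rfl

lemma mem_Pcc_iff {n i : ℕ} (hi : 1 ≤ i) (x : EuclideanSpace ℝ (Fin n)) :
    x ∈ Pcc n i ↔ (∀ j, |x j| ≤ 1) ∧ ∑ j, |x j| ≤ (i : ℝ) := by
  have hi0 : (i : ℝ) ≠ 0 := by positivity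
  constructor
  · rintro ⟨h1, h2⟩
    refine ⟨h1, ?_⟩
    rw [Set.mem_smul_set_iff_inv_smul_mem₀ hi0] at h2
    have h2' : ∑ j, |((i:ℝ)⁻¹ • x : EuclideanSpace ℝ (Fin n)) j| ≤ 1 := h2
    have : ∑ j, |((i:ℝ)⁻¹ • x : EuclideanSpace ℝ (Fin n)) j| = (i:ℝ)⁻¹ * ∑ j, |x j| := by
      rw [Finset.mul_sum]
      refine Finset.sum_congr rfl fun j _ => ?_
      simp [abs_mul, abs_of_nonneg (show (0:ℝ) ≤ (i:ℝ)⁻¹ by positivity)]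
    rw [this] at h2'
    calc ∑ j, |x j| = (i:ℝ) * ((i:ℝ)⁻¹ * ∑ j, |x j|) := by field_simp
    _ ≤ (i:ℝ) * 1 := by
        exact mul_le_mul_of_nonneg_left h2' (Nat.cast_nonneg i)
    _ = (i:ℝ) := mul_one _
  · rintro ⟨h1, h2⟩
    refine ⟨h1, ?_⟩
    rw [Set.mem_smul_set_iff_inv_smul_mem₀ hi0]
    show ∑ j, |((i:ℝ)⁻¹ • x : EuclideanSpace ℝ (Fin n)) j| ≤ 1
    have : ∑ j, |((i:ℝ)⁻¹ • x : EuclideanSpace ℝ (Fin n)) j| = (i:ℝ)⁻¹ * ∑ j, |x j| := by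
      rw [Finset.mul_sum]
      refine Finset.sum_congr rfl fun j _ => ?_
      simp [abs_mul, abs_of_nonneg (show (0:ℝ) ≤ (i:ℝ)⁻¹ by positivity)]
    rw [this]
    rw [inv_mul_le_iff₀ (by positivity), mul_one]
    exact h2
open Submodule Module

variable {n : ℕ}

noncomputable def stdv (j : Fin n) : EuclideanSpace ℝ (Fin n) := EuclideanSpace.single j 1

lemma stdv_indep : LinearIndependent ℝ (stdv (n := n)) := by
  have hfe : (stdv (n := n)) = ⇑(EuclideanSpace.basisFun (Fin n) ℝ).toBasis := by
    funext j
    simp [stdv, EuclideanSpace.basisFun_apply]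
  rw [hfe]
  exact (EuclideanSpace.basisFun (Fin n) ℝ).toBasis.linearIndependent

lemma coord_zero_of_mem_span {S : Set (Fin n)} {j : Fin n} (hj : j ∉ S)
    {v : EuclideanSpace ℝ (Fin n)} (hv : v ∈ span ℝ (stdv '' S)) : v j = 0 := by
  induction hv using Submodule.span_induction with
  | mem x hx =>
      obtain ⟨k, hk, rfl⟩ := hx
      have : k ≠ j := fun h => hj (h ▸ hk)
      simp [stdv, EuclideanSpace.single_apply, Ne.symm this]
  | zero => rfl
  | add x y _ _ hx hy => rw [PiLp.add_apply, hx, hy, add_zero]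
  | smul c x _ hx => rw [PiLp.smul_apply, hx, smul_zero]

lemma finrank_span_stdv_compl (J : Finset (Fin n)) :
    finrank ℝ (span ℝ (stdv '' {j : Fin n | j ∉ J})) = n - J.card := by
  have hinj : Function.Injective (fun j : {j : Fin n // j ∉ J} => (j : Fin n)) :=
    Subtype.val_injective
  have hli : LinearIndependent ℝ (fun j : {j : Fin n // j ∉ J} => stdv (j : Fin n)) :=
    stdv_indep.comp _ hinj
  have hr : Set.range (fun j : {j : Fin n // j ∉ J} => stdv (j : Fin n))
      = stdv '' {j : Fin n | j ∉ J} := by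
    ext v; constructor
    · rintro ⟨⟨k, hk⟩, rfl⟩; exact ⟨k, hk, rfl⟩
    · rintro ⟨k, hk, rfl⟩; exact ⟨⟨k, hk⟩, rfl⟩
  rw [← hr, finrank_span_eq_card hli]
  rw [Fintype.card_subtype_compl]
  simp [Fintype.card_coe]

/-- For any subspace `D` there is a small set `T` of coordinates such that `D` together with
the standard vectors indexed by `T` spans everything. -/
lemma exists_coord_complement :
    ∀ (k : ℕ) (D : Submodule ℝ (EuclideanSpace ℝ (Fin n))), n - finrank ℝ D ≤ k →
      ∃ T : Finset (Fin n), T.card ≤ k ∧ D ⊔ span ℝ (stdv '' (T : Set (Fin n))) = ⊤ := by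
  intro k
  induction k with
  | zero =>
      intro D hD
      refine ⟨∅, le_refl _, ?_⟩
      have h1 : finrank ℝ D ≥ n := by omega
      have h2 : finrank ℝ (EuclideanSpace ℝ (Fin n)) = n := finrank_euclideanSpace_fin
      have h3 : finrank ℝ D ≤ finrank ℝ (EuclideanSpace ℝ (Fin n)) := Submodule.finrank_le D
      rw [h2] at h3
      have : D = ⊤ := Submodule.eq_top_of_finrank_eq (by omega)
      simp [this]
  | succ k ih =>
      intro D hD
      by_cases hDt : D = ⊤
      · exact ⟨∅, Nat.zero_le _, by simp [hDt]⟩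
      · have hex : ∃ j : Fin n, stdv j ∉ D := by
          by_contra h
          push_neg at h
          apply hDt
          rw [← top_le_iff]
          have hfe : (stdv (n := n)) = ⇑(EuclideanSpace.basisFun (Fin n) ℝ).toBasis := by
            funext j
            simp [stdv, EuclideanSpace.basisFun_apply]
          have : span ℝ (Set.range (stdv (n := n))) = ⊤ := by
            rw [hfe]
            exact (EuclideanSpace.basisFun (Fin n) ℝ).toBasis.span_eq
          rw [← this]
          exact span_le.2 (by rintro v ⟨j, rfl⟩; exact h j)
        obtain ⟨j, hj⟩ := hex
        have hjne : stdv j ≠ 0 := by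
          intro h
          exact hj (h ▸ D.zero_mem)
        have hinf : D ⊓ span ℝ {stdv j} = ⊥ := by
          rw [eq_bot_iff]
          rintro x ⟨hxD, hxs⟩
          obtain ⟨c, rfl⟩ := Submodule.mem_span_singleton.1 hxs
          rcases eq_or_ne c 0 with rfl | hc
          · simp
          · exfalso
            apply hj
            have := D.smul_mem c⁻¹ hxD
            rwa [smul_smul, inv_mul_cancel₀ hc, one_smul] at this
        have hrank : finrank ℝ (D ⊔ span ℝ {stdv j} : Submodule ℝ _) = finrank ℝ D + 1 := by
          have := Submodule.finrank_sup_add_finrank_inf_eq D (span ℝ {stdv j})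
          rw [hinf, finrank_span_singleton hjne] at this
          simpa using this
        obtain ⟨T', hT'c, hT'⟩ := ih (D ⊔ span ℝ {stdv j}) (by omega)
        refine ⟨insert j T', (Finset.card_insert_le _ _).trans (by omega), ?_⟩
        have himg : stdv '' ((insert j T' : Finset (Fin n)) : Set (Fin n))
            = insert (stdv j) (stdv '' (T' : Set (Fin n))) := by
          rw [Finset.coe_insert, Set.image_insert_eq]
        rw [himg, Submodule.span_insert, ← sup_assoc]
        exact hT'

lemma half_le_abs_half_sub_int (m : ℤ) : (1/2 : ℝ) ≤ |1/2 - (m : ℝ)| := by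
  rcases le_or_gt m 0 with h | h
  · have : (m : ℝ) ≤ 0 := by exact_mod_cast h
    rw [abs_of_pos (by linarith)]
    linarith
  · have : (1 : ℝ) ≤ m := by exact_mod_cast h
    rw [abs_of_nonpos (by linarith)]
    linarith

/-- Key extraction lemma: if `μ` is in the covering set of `K`, then for every coordinate
set `J` of size `i` there is a point of `K` all of whose `J`-coordinates are at
least `1/(2μ)` in absolute value. -/
lemma exists_large_coords {n i : ℕ} {K : Set (EuclideanSpace ℝ (Fin n))} {μ : ℝ}
    (hμ : μ ∈ covSet n i K) (J : Finset (Fin n)) (hJ : J.card = i) :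
    ∃ y ∈ K, ∀ j ∈ J, 1/2 ≤ μ * |y j| := by
  classical
  set D : Submodule ℝ (EuclideanSpace ℝ (Fin n)) := span ℝ (stdv '' {j : Fin n | j ∉ J}) with hD
  set p₀ : EuclideanSpace ℝ (Fin n) := WithLp.toLp 2 (fun j => if j ∈ J then (1/2 : ℝ) else 0) with hp₀
  set L : AffineSubspace ℝ (EuclideanSpace ℝ (Fin n)) := AffineSubspace.mk' p₀ D with hL
  have hLne : (L : Set (EuclideanSpace ℝ (Fin n))).Nonempty :=
    ⟨p₀, AffineSubspace.self_mem_mk' _ _⟩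
  have hLrank : Module.finrank ℝ L.direction = n - i := by
    rw [hL, AffineSubspace.direction_mk', hD, finrank_span_stdv_compl, hJ]
  obtain ⟨w, hw1, hw2⟩ := hμ.2 L hLne hLrank
  rw [Set.mem_add] at hw1
  obtain ⟨a, ha, b, hb, hab⟩ := hw1
  rw [Set.mem_smul_set] at ha
  obtain ⟨y, hy, rfl⟩ := ha
  refine ⟨y, hy, fun j hj => ?_⟩
  have hv : w - p₀ ∈ D := by
    have := (AffineSubspace.mem_mk').1 hw2
    simpa [vsub_eq_sub] using this
  have hvj : (w - p₀) j = 0 :=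
    coord_zero_of_mem_span (by simp [hj]) hv
  have hwj : w j = 1/2 := by
    have : w j - p₀ j = 0 := hvj
    have hpj : p₀ j = 1/2 := by simp [hp₀, hj]
    linarith
  obtain ⟨m, hm⟩ := hb j
  have habj : μ * y j + b j = w j := by
    rw [← hab]
    simp [PiLp.add_apply, PiLp.smul_apply, smul_eq_mul]
  have : μ * y j = 1/2 - (m : ℝ) := by rw [hm] at habj; linarith [hwj]
  calc (1/2 : ℝ) ≤ |1/2 - (m : ℝ)| := half_le_abs_half_sub_int m
  _ = |μ * y j| := by rw [this]
  _ = μ * |y j| := by rw [abs_mul, abs_of_pos hμ.1]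

/-- `1/2` belongs to the covering set of `P_{n,i}`. -/
lemma half_mem_covSet_Pcc {n i : ℕ} (hi1 : 1 ≤ i) (hi2 : i ≤ n) :
    (1/2 : ℝ) ∈ covSet n i (Pcc n i) := by
  classical
  refine ⟨by norm_num, fun L hLne hLrank => ?_⟩
  obtain ⟨T, hTc, hT⟩ := exists_coord_complement i L.direction
    (by rw [hLrank, Nat.sub_sub_self hi2])
  obtain ⟨p, hp⟩ := hLne
  have hptop : p ∈ (L.direction ⊔ span ℝ (stdv '' (T : Set (Fin n))) : Submodule ℝ _) := by
    rw [hT]; trivial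
  rw [Submodule.mem_sup] at hptop
  obtain ⟨d, hd, t, ht, hdt⟩ := hptop
  set x : EuclideanSpace ℝ (Fin n) := (-d) +ᵥ p with hx
  have hxL : x ∈ L := AffineSubspace.vadd_mem_of_mem_direction (L.direction.neg_mem hd) hp
  have hxt : x = t := by
    rw [hx, vadd_eq_add, ← hdt]
    abel
  have hxj : ∀ j ∉ T, x j = 0 := fun j hj => by
    rw [hxt]; exact coord_zero_of_mem_span (by simpa using hj) ht
  set y : EuclideanSpace ℝ (Fin n) := WithLp.toLp 2 (fun j => 2 * (x j - (round (x j) : ℝ))) with hy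
  set b : EuclideanSpace ℝ (Fin n) := WithLp.toLp 2 (fun j => ((round (x j) : ℤ) : ℝ)) with hb
  have hyP : y ∈ Pcc n i := by
    rw [mem_Pcc_iff hi1]
    constructor
    · intro j
      have := abs_sub_round (x j)
      rw [hy]
      simp only [abs_mul, abs_two]
      calc 2 * |x j - (round (x j) : ℝ)| ≤ 2 * (1/2) := by
            apply mul_le_mul_of_nonneg_left (abs_sub_round _) (by norm_num)
      _ = 1 := by norm_num
    · have hvan : ∀ j ∈ Finset.univ, j ∉ T → |y j| = 0 := by
        intro j _ hj
        simp [hy, hxj j hj]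
      rw [← Finset.sum_subset (Finset.subset_univ T) hvan]
      calc ∑ j ∈ T, |y j| ≤ ∑ j ∈ T, 1 := by
            apply Finset.sum_le_sum
            intro j _
            have := abs_sub_round (x j)
            rw [hy]
            simp only [abs_mul, abs_two]
            calc 2 * |x j - (round (x j) : ℝ)| ≤ 2 * (1/2) := by
                  apply mul_le_mul_of_nonneg_left (abs_sub_round _) (by norm_num)
            _ = 1 := by norm_num
      _ = (T.card : ℝ) := by simp
      _ ≤ (i : ℝ) := by exact_mod_cast hTc
  refine ⟨x, ?_, hxL⟩
  rw [Set.mem_add]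
  refine ⟨(1/2 : ℝ) • y, Set.smul_mem_smul_set hyP, b, fun j => ⟨round (x j), rfl⟩, ?_⟩
  ext j
  simp only [PiLp.add_apply, PiLp.smul_apply, smul_eq_mul, hy, hb, PiLp.toLp_apply]
  ring

lemma abs_coord_le_norm {n : ℕ} (y : EuclideanSpace ℝ (Fin n)) (j : Fin n) : |y j| ≤ ‖y‖ := by
  rw [EuclideanSpace.norm_eq]
  calc |y j| = Real.sqrt (‖y j‖ ^ 2) := by rw [Real.sqrt_sq_eq_abs]; simp [Real.norm_eq_abs]
  _ ≤ Real.sqrt (∑ k, ‖y k‖ ^ 2) := by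
      apply Real.sqrt_le_sqrt
      exact Finset.single_le_sum (f := fun k => ‖y k‖ ^ 2) (fun k _ => sq_nonneg _) (Finset.mem_univ j)

lemma exists_mem_covSet {n i : ℕ} {K : Set (EuclideanSpace ℝ (Fin n))}
    (x₀ : EuclideanSpace ℝ (Fin n)) (r : ℝ) (hr : 0 < r) (hball : Metric.ball x₀ r ⊆ K) :
    (2 * (Real.sqrt n + 1) / r) ∈ covSet n i K := by
  classical
  set μ : ℝ := 2 * (Real.sqrt n + 1) / r with hμdef
  have hsn : (0:ℝ) ≤ Real.sqrt n := Real.sqrt_nonneg _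
  have hμ : 0 < μ := by positivity
  refine ⟨hμ, fun L hLne _ => ?_⟩
  obtain ⟨p, hp⟩ := hLne
  set v : EuclideanSpace ℝ (Fin n) := p - μ • x₀ with hv
  set e : EuclideanSpace ℝ (Fin n) := WithLp.toLp 2 (fun j => v j - (round (v j) : ℝ)) with he
  set b : EuclideanSpace ℝ (Fin n) := WithLp.toLp 2 (fun j => ((round (v j) : ℤ) : ℝ)) with hbdef
  have henorm : ‖e‖ ≤ Real.sqrt n := by
    rw [EuclideanSpace.norm_eq]
    have h1 : ∑ j, ‖e j‖ ^ 2 ≤ (n : ℝ) := by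
      calc ∑ j, ‖e j‖ ^ 2 ≤ ∑ j : Fin n, (1:ℝ) := by
            apply Finset.sum_le_sum
            intro j _
            have h2 : |e j| ≤ 1/2 := abs_sub_round (v j)
            have : ‖e j‖ ≤ 1/2 := by rwa [Real.norm_eq_abs]
            nlinarith [norm_nonneg (e j)]
      _ = (n : ℝ) := by simp
    exact Real.sqrt_le_sqrt h1
  set y : EuclideanSpace ℝ (Fin n) := x₀ + μ⁻¹ • e with hy
  have hyK : y ∈ K := by
    apply hball
    rw [Metric.mem_ball, dist_eq_norm]
    have : y - x₀ = μ⁻¹ • e := by rw [hy, add_sub_cancel_left]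
    rw [this, norm_smul, Real.norm_eq_abs, abs_of_pos (by positivity)]
    calc μ⁻¹ * ‖e‖ ≤ μ⁻¹ * Real.sqrt n := by
          apply mul_le_mul_of_nonneg_left henorm (by positivity)
    _ < r := by
        rw [inv_mul_lt_iff₀ hμ, hμdef]
        rw [div_mul_eq_mul_div, mul_comm, ← div_mul_eq_mul_div, div_self (ne_of_gt hr)]
        nlinarith
  refine ⟨p, ?_, hp⟩
  rw [Set.mem_add]
  refine ⟨μ • y, Set.smul_mem_smul_set hyK, b, fun j => ⟨round (v j), rfl⟩, ?_⟩
  ext j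
  have hμne : μ ≠ 0 := ne_of_gt hμ
  have hvj : v j = p j - μ * x₀ j := by rw [hv]; simp [PiLp.sub_apply, PiLp.smul_apply]
  have hbj : b j = (round (v j) : ℝ) := rfl
  have hej : e j = v j - (round (v j) : ℝ) := rfl
  have hyj : y j = x₀ j + μ⁻¹ * e j := by
    rw [hy, PiLp.add_apply, PiLp.smul_apply, smul_eq_mul]
  show μ * y j + b j = p j
  rw [hyj]
  have hsum : e j + b j = v j := by rw [hej, hbj]; ring
  have hexp : μ * (x₀ j + μ⁻¹ * e j) = μ * x₀ j + e j := by field_simp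
  rw [hexp]
  have : v j = p j - μ * x₀ j := hvj
  linarith [hsum]

lemma covSet_bddBelow {n i : ℕ} (K : Set (EuclideanSpace ℝ (Fin n))) :
    BddBelow (covSet n i K) := ⟨0, fun μ h => h.1.le⟩

lemma covMin_Pcc {n i : ℕ} (hi1 : 1 ≤ i) (hi2 : i ≤ n) :
    covMin n i (Pcc n i) = 1/2 := by
  rw [covMin_eq_sInf]
  apply le_antisymm
  · exact csInf_le (covSet_bddBelow _) (half_mem_covSet_Pcc hi1 hi2)
  · apply le_csInf ⟨_, half_mem_covSet_Pcc hi1 hi2⟩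
    intro μ hμ
    obtain ⟨J, _, hJcard⟩ := Finset.exists_subset_card_eq (show i ≤ (Finset.univ : Finset (Fin n)).card by simpa using hi2)
    obtain ⟨j₀, hj₀⟩ := Finset.card_pos.1 (by omega : 0 < J.card)
    obtain ⟨y, hyP, hy⟩ := exists_large_coords hμ J hJcard
    have h1 : |y j₀| ≤ 1 := ((mem_Pcc_iff hi1 y).1 hyP).1 j₀
    have h2 := hy j₀ hj₀
    nlinarith [hμ.1, abs_nonneg (y j₀)]

lemma covMin_pos {n i : ℕ} {K : Set (EuclideanSpace ℝ (Fin n))} (hi1 : 1 ≤ i) (hi2 : i ≤ n)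
    (hKcpt : IsCompact K) (hne : (covSet n i K).Nonempty) : 0 < covMin n i K := by
  rw [covMin_eq_sInf]
  obtain ⟨C, hC⟩ := hKcpt.isBounded.exists_norm_le
  set M : ℝ := max C 1 with hM
  have hM0 : 0 < M := lt_of_lt_of_le one_pos (le_max_right _ _)
  have key : ∀ μ ∈ covSet n i K, 1/(2*M) ≤ μ := by
    intro μ hμ
    obtain ⟨J, _, hJcard⟩ := Finset.exists_subset_card_eq (show i ≤ (Finset.univ : Finset (Fin n)).card by simpa using hi2)
    obtain ⟨j₀, hj₀⟩ := Finset.card_pos.1 (by omega : 0 < J.card)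
    obtain ⟨y, hyK, hy⟩ := exists_large_coords hμ J hJcard
    have h1 : |y j₀| ≤ M := le_trans (abs_coord_le_norm y j₀) (le_trans (hC y hyK) (le_max_left _ _))
    have h2 := hy j₀ hj₀
    rw [div_le_iff₀ (by positivity)]
    nlinarith [hμ.1, abs_nonneg (y j₀)]
  calc (0:ℝ) < 1/(2*M) := by positivity
  _ ≤ sInf (covSet n i K) := le_csInf hne key

/-- A convex standard unconditional set is coordinatewise monotone. -/
lemma uncond_mono {n : ℕ} {K : Set (EuclideanSpace ℝ (Fin n))} (hconv : Convex ℝ K)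
    (hu : StdUnconditional n K) {x y : EuclideanSpace ℝ (Fin n)} (hx : x ∈ K)
    (h : ∀ j, |y j| ≤ |x j|) : y ∈ K := by
  classical
  have claim : ∀ s : Finset (Fin n),
      (WithLp.toLp 2 (fun j => if j ∈ s then y j else x j) : EuclideanSpace ℝ (Fin n)) ∈ K := by
    intro s
    induction s using Finset.induction with
    | empty => simpa using hx
    | @insert a s ha ih =>
        set g : EuclideanSpace ℝ (Fin n) := WithLp.toLp 2 (fun j => if j ∈ s then y j else x j) with hg
        set t : ℝ := if x a = 0 then 0 else y a / x a with ht
        have hyx : y a = t * x a := by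
          rw [ht]
          by_cases h0 : x a = 0
          · have : |y a| ≤ 0 := h0 ▸ (by simpa [h0] using h a)
            have : y a = 0 := abs_nonpos_iff.1 this
            simp [h0, this]
          · rw [if_neg h0]; field_simp
        have habs : |t| ≤ 1 := by
          rw [ht]
          by_cases h0 : x a = 0
          · simp [h0]
          · rw [if_neg h0, abs_div, div_le_one (abs_pos.2 h0)]
            exact h a
        set ε : Fin n → ℝ := fun j => if j = a then -1 else 1 with hε
        have hflip : (WithLp.toLp 2 (fun j => ε j * g j) : EuclideanSpace ℝ (Fin n)) ∈ K :=
          hu g ih ε (fun j => by by_cases hj : j = a <;> simp [hε, hj])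
        set θ : ℝ := (1 + t)/2 with hθ
        have hθ0 : 0 ≤ θ := by rw [hθ]; cases abs_le.1 habs; linarith
        have hθ1 : 0 ≤ 1 - θ := by rw [hθ]; cases abs_le.1 habs; linarith
        have hcombo := hconv ih hflip hθ0 hθ1 (by ring)
        have happ : ∀ (u v : EuclideanSpace ℝ (Fin n)) (c d : ℝ) (j : Fin n),
            (c • u + d • v) j = c * u j + d * v j := by
          intros u v c d j
          simp [PiLp.add_apply, PiLp.smul_apply]
        convert hcombo using 1
        ext j
        simp only [happ]
        by_cases hj : j = a
        · subst hj
          have hga : g j = x j := by simp [hg, ha]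
          have h1 : (if j ∈ insert j s then y j else x j) = y j := by simp
          have h2 : ε j = -1 := by simp [hε]
          rw [h1, h2, hga, hyx, hθ]
          ring
        · have h1 : (if j ∈ insert a s then y j else x j) = g j := by
            simp only [Finset.mem_insert, hg]
            by_cases hjs : j ∈ s <;> simp [hj, hjs]
          have h2 : ε j = 1 := by simp [hε, hj]
          rw [h1, h2]
          ring
  have := claim Finset.univ
  simpa using this


lemma sum_shift {n : ℕ} (x : Fin n → ℝ) {j k : Fin n} (h : j ≠ k) (d : ℝ) :
    ∑ m, (if m = j then x j + d else if m = k then x k - d else x m) = ∑ m, x m := by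
  classical
  have hcongr : ∀ m ∈ Finset.univ,
      (if m = j then x j + d else if m = k then x k - d else x m)
        = x m + (if m = j then d else 0) - (if m = k then d else 0) := by
    intro m _
    by_cases h1 : m = j
    · subst h1
      rw [if_pos rfl, if_pos rfl, if_neg h]
      ring
    · by_cases h2 : m = k
      · subst h2; simp [h1]
      · simp [h1, h2]
  rw [Finset.sum_congr rfl hcongr]
  rw [Finset.sum_sub_distrib, Finset.sum_add_distrib]
  simp [Finset.sum_ite_eq']

lemma combo_apply {n : ℕ} (u v : EuclideanSpace ℝ (Fin n)) (c d : ℝ) (j : Fin n) :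
    (c • u + d • v) j = c * u j + d * v j := by
  simp [PiLp.add_apply, PiLp.smul_apply]


lemma mem_of_boxsum_aux {n i : ℕ} {K : Set (EuclideanSpace ℝ (Fin n))}
    (hconv : Convex ℝ K) (hu : StdUnconditional n K) {c : ℝ} (hc : 0 < c) (hi2 : i ≤ n)
    (hv : ∀ J : Finset (Fin n), J.card = i →
      (WithLp.toLp 2 (fun j => if j ∈ J then c else 0) : EuclideanSpace ℝ (Fin n)) ∈ K) :
    ∀ (N : ℕ) (x : EuclideanSpace ℝ (Fin n)), (∀ j, 0 ≤ x j) → (∀ j, x j ≤ c) →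
      (∑ j, x j) ≤ i * c →
      (Finset.univ.filter (fun j => x j ≠ 0 ∧ x j ≠ c)).card ≤ N → x ∈ K := by
  intro N
  induction N with
  | zero =>
      intro x hx0 hxc hxs hcard
      have hF : (Finset.univ.filter (fun j => x j ≠ 0 ∧ x j ≠ c)) = ∅ :=
        Finset.card_eq_zero.1 (Nat.le_zero.1 hcard)
      have hall : ∀ j, x j = 0 ∨ x j = c := by
        intro j
        by_contra hcon
        push_neg at hcon
        have : j ∈ Finset.univ.filter (fun j => x j ≠ 0 ∧ x j ≠ c) := by
          simp [hcon.1, hcon.2]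
        rw [hF] at this
        exact absurd this (Finset.notMem_empty j)
      set J : Finset (Fin n) := Finset.univ.filter (fun j => x j = c) with hJ
      have hJsum : (J.card : ℝ) * c ≤ ∑ j, x j := by
        have h1 : ∑ j ∈ J, x j = (J.card : ℝ) * c := by
          rw [Finset.sum_congr rfl (fun j hj => (Finset.mem_filter.1 hj).2)]
          simp [mul_comm, hJ]
        rw [← h1]
        exact Finset.sum_le_sum_of_subset_of_nonneg (Finset.subset_univ J)
          (fun j _ _ => hx0 j)
      have hJi : J.card ≤ i := by
        have h2 : (J.card : ℝ) * c ≤ (i : ℝ) * c := le_trans hJsum hxs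
        have := le_of_mul_le_mul_right h2 hc
        exact_mod_cast this
      obtain ⟨J', hJJ', hJ'card⟩ := Finset.exists_superset_card_eq hJi (by simpa using hi2)
      apply uncond_mono hconv hu (hv J' hJ'card)
      intro j
      rcases hall j with h0 | hcj
      · simp [h0]
      · have : j ∈ J := by simp [hJ, hcj]
        have : j ∈ J' := hJJ' this
        simp [this, hcj]
  | succ N ih =>
      intro x hx0 hxc hxs hcard
      set F := Finset.univ.filter (fun j => x j ≠ 0 ∧ x j ≠ c) with hFdef
      rcases Nat.lt_or_ge F.card (N+1) with hlt | hge
      · exact ih x hx0 hxc hxs (Nat.lt_succ_iff.1 hlt)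
      · have hFne : F.Nonempty := Finset.card_pos.1 (by omega)
        obtain ⟨j, hjF⟩ := hFne
        have hj0 : x j ≠ 0 := (Finset.mem_filter.1 hjF).2.1
        have hjc : x j ≠ c := (Finset.mem_filter.1 hjF).2.2
        have hxj0 : 0 < x j := lt_of_le_of_ne (hx0 j) (Ne.symm hj0)
        have hxjc : x j < c := lt_of_le_of_ne (hxc j) hjc
        have hcard_erase : ∀ w ∈ F, (F.erase w).card ≤ N := by
          intro w hw
          rw [Finset.card_erase_of_mem hw]
          omega
        by_cases hk : ∃ k ∈ F, k ≠ j
        · -- two fractional coordinates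
          obtain ⟨k, hkF, hkj⟩ := hk
          have hjk : j ≠ k := Ne.symm hkj
          have hk0 : 0 < x k := lt_of_le_of_ne (hx0 k) (Ne.symm (Finset.mem_filter.1 hkF).2.1)
          have hkc : x k < c := lt_of_le_of_ne (hxc k) (Finset.mem_filter.1 hkF).2.2
          set δ1 : ℝ := min (c - x j) (x k) with hδ1def
          set δ2 : ℝ := min (x j) (c - x k) with hδ2def
          have hδ1 : 0 < δ1 := lt_min (by linarith) hk0
          have hδ2 : 0 < δ2 := lt_min hxj0 (by linarith)
          set x1 : EuclideanSpace ℝ (Fin n) :=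
            WithLp.toLp 2 (fun m => if m = j then x j + δ1 else if m = k then x k - δ1 else x m) with hx1
          set x2 : EuclideanSpace ℝ (Fin n) :=
            WithLp.toLp 2 (fun m => if m = j then x j + -δ2 else if m = k then x k - -δ2 else x m) with hx2
          have hsum1 : ∑ m, x1 m = ∑ m, x m := sum_shift x hjk δ1
          have hsum2 : ∑ m, x2 m = ∑ m, x m := sum_shift x hjk (-δ2)
          have ap1j : x1 j = x j + δ1 := by rw [hx1]; simp
          have ap1k : x1 k = x k - δ1 := by rw [hx1]; simp [hkj]
          have ap1 : ∀ m, m ≠ j → m ≠ k → x1 m = x m := by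
            intro m h1 h2; rw [hx1]; simp [h1, h2]
          have ap2j : x2 j = x j - δ2 := by rw [hx2]; simp; ring
          have ap2k : x2 k = x k + δ2 := by rw [hx2]; simp [hkj]
          have ap2 : ∀ m, m ≠ j → m ≠ k → x2 m = x m := by
            intro m h1 h2; rw [hx2]; simp [h1, h2]
          have hb1 : ∀ m, 0 ≤ x1 m ∧ x1 m ≤ c := by
            intro m
            by_cases h1 : m = j
            · rw [h1, ap1j]
              constructor
              · linarith
              · have := min_le_left (c - x j) (x k); linarith
            · by_cases h2 : m = k
              · rw [h2, ap1k]
                constructor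
                · have := min_le_right (c - x j) (x k); linarith
                · linarith
              · rw [ap1 m h1 h2]
                exact ⟨hx0 m, hxc m⟩
          have hb2 : ∀ m, 0 ≤ x2 m ∧ x2 m ≤ c := by
            intro m
            by_cases h1 : m = j
            · rw [h1, ap2j]
              constructor
              · have := min_le_left (x j) (c - x k); linarith
              · linarith
            · by_cases h2 : m = k
              · rw [h2, ap2k]
                constructor
                · linarith
                · have := min_le_right (x j) (c - x k); linarith
              · rw [ap2 m h1 h2]
                exact ⟨hx0 m, hxc m⟩
          have hmemF : ∀ m, x1 m ≠ 0 → x1 m ≠ c → m ∈ F := by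
            intro m hm0 hmc
            by_cases h1 : m = j
            · exact h1 ▸ hjF
            · by_cases h2 : m = k
              · exact h2 ▸ hkF
              · have : x1 m = x m := ap1 m h1 h2
                rw [this] at hm0 hmc
                simp [hFdef, hm0, hmc]
          have hmemF2 : ∀ m, x2 m ≠ 0 → x2 m ≠ c → m ∈ F := by
            intro m hm0 hmc
            by_cases h1 : m = j
            · exact h1 ▸ hjF
            · by_cases h2 : m = k
              · exact h2 ▸ hkF
              · have : x2 m = x m := ap2 m h1 h2
                rw [this] at hm0 hmc
                simp [hFdef, hm0, hmc]
          have hcard1 : (Finset.univ.filter (fun m => x1 m ≠ 0 ∧ x1 m ≠ c)).card ≤ N := by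
            rcases min_cases (c - x j) (x k) with ⟨hmin, _⟩ | ⟨hmin, _⟩
            · -- x1 j = c
              have hval : x1 j = c := by rw [ap1j, hδ1def, hmin]; ring
              refine le_trans (Finset.card_le_card ?_) (hcard_erase j hjF)
              intro m hm
              rw [Finset.mem_filter] at hm
              refine Finset.mem_erase.2 ⟨?_, hmemF m hm.2.1 hm.2.2⟩
              intro hmj
              exact hm.2.2 (hmj ▸ hval)
            · -- x1 k = 0
              have hval : x1 k = 0 := by rw [ap1k, hδ1def, hmin]; ring
              refine le_trans (Finset.card_le_card ?_) (hcard_erase k hkF)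
              intro m hm
              rw [Finset.mem_filter] at hm
              refine Finset.mem_erase.2 ⟨?_, hmemF m hm.2.1 hm.2.2⟩
              intro hmk
              exact hm.2.1 (hmk ▸ hval)
          have hcard2 : (Finset.univ.filter (fun m => x2 m ≠ 0 ∧ x2 m ≠ c)).card ≤ N := by
            rcases min_cases (x j) (c - x k) with ⟨hmin, _⟩ | ⟨hmin, _⟩
            · -- x2 j = 0
              have hval : x2 j = 0 := by rw [ap2j, hδ2def, hmin]; ring
              refine le_trans (Finset.card_le_card ?_) (hcard_erase j hjF)
              intro m hm
              rw [Finset.mem_filter] at hm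
              refine Finset.mem_erase.2 ⟨?_, hmemF2 m hm.2.1 hm.2.2⟩
              intro hmj
              exact hm.2.1 (hmj ▸ hval)
            · -- x2 k = c
              have hval : x2 k = c := by rw [ap2k, hδ2def, hmin]; ring
              refine le_trans (Finset.card_le_card ?_) (hcard_erase k hkF)
              intro m hm
              rw [Finset.mem_filter] at hm
              refine Finset.mem_erase.2 ⟨?_, hmemF2 m hm.2.1 hm.2.2⟩
              intro hmk
              exact hm.2.2 (hmk ▸ hval)
          have hmem1 : x1 ∈ K := ih x1 (fun m => (hb1 m).1) (fun m => (hb1 m).2)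
            (by rw [hsum1]; exact hxs) hcard1
          have hmem2 : x2 ∈ K := ih x2 (fun m => (hb2 m).1) (fun m => (hb2 m).2)
            (by rw [hsum2]; exact hxs) hcard2
          set lam : ℝ := δ2 / (δ1 + δ2) with hlam
          have hδ12 : 0 < δ1 + δ2 := by linarith
          have hlam0 : 0 ≤ lam := by positivity
          have hlam1 : 0 ≤ 1 - lam := by
            rw [hlam, sub_nonneg, div_le_one hδ12]
            linarith
          have hcombo := hconv hmem1 hmem2 hlam0 hlam1 (by ring)
          have hxeq : x = lam • x1 + (1 - lam) • x2 := by
            ext m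
            rw [combo_apply]
            by_cases h1 : m = j
            · rw [h1, ap1j, ap2j, hlam]
              field_simp
              ring
            · by_cases h2 : m = k
              · rw [h2, ap1k, ap2k, hlam]
                field_simp
                ring
              · rw [ap1 m h1 h2, ap2 m h1 h2]
                ring
          rw [hxeq]
          exact hcombo
        · -- exactly one fractional coordinate, namely j
          push_neg at hk
          have hsingle : ∀ m, m ≠ j → x m = 0 ∨ x m = c := by
            intro m hm
            by_contra hcon
            push_neg at hcon
            have : m ∈ F := by simp [hFdef, hcon.1, hcon.2]
            exact hm (hk m this)
          set x1 : EuclideanSpace ℝ (Fin n) :=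
            WithLp.toLp 2 (fun m => if m = j then c else x m) with hx1
          set x0 : EuclideanSpace ℝ (Fin n) :=
            WithLp.toLp 2 (fun m => if m = j then 0 else x m) with hx0'
          set J' : Finset (Fin n) := Finset.univ.filter (fun m => x m = c) with hJ'
          have hjJ' : j ∉ J' := by simp [hJ', hjc]
          have herase : ∑ m ∈ Finset.univ.erase j, x m = (J'.card : ℝ) * c := by
            rw [← Finset.sum_subset (Finset.subset_erase.2 ⟨Finset.subset_univ J',
              hjJ'⟩) (fun m hm hmJ' => ?_)]
            · rw [Finset.sum_congr rfl (fun m hm => (Finset.mem_filter.1 hm).2)]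
              simp [mul_comm, hJ']
            · rcases hsingle m (Finset.mem_erase.1 hm).1 with h | h
              · exact h
              · exact absurd (by simp [hJ', h]) hmJ'
          have htotal : ∑ m, x m = x j + (J'.card : ℝ) * c := by
            rw [← herase, ← Finset.add_sum_erase _ _ (Finset.mem_univ j)]
          have hJ'i : (J'.card : ℝ) * c + x j ≤ (i:ℝ) * c := by
            rw [htotal] at hxs; linarith
          have hJ'lt : J'.card < i := by
            by_contra hcon
            push_neg at hcon
            have : (i : ℝ) * c ≤ (J'.card : ℝ) * c := by
              apply mul_le_mul_of_nonneg_right _ hc.le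
              exact_mod_cast hcon
            linarith
          have hsum1 : ∑ m, x1 m ≤ (i:ℝ) * c := by
            have : ∑ m, x1 m = c + (J'.card : ℝ) * c := by
              rw [← Finset.add_sum_erase _ _ (Finset.mem_univ j)]
              have e1 : x1 j = c := by rw [hx1]; simp
              have e2 : ∑ m ∈ Finset.univ.erase j, x1 m = ∑ m ∈ Finset.univ.erase j, x m :=
                Finset.sum_congr rfl (fun m hm => by
                  rw [hx1]; simp [(Finset.mem_erase.1 hm).1])
              rw [e1, e2, herase]
            rw [this]
            have : ((J'.card : ℝ) + 1) * c ≤ (i:ℝ) * c := by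
              apply mul_le_mul_of_nonneg_right _ hc.le
              have : (J'.card : ℝ) + 1 ≤ (i : ℝ) := by exact_mod_cast hJ'lt
              linarith
            linarith
          have hsum0 : ∑ m, x0 m ≤ (i:ℝ) * c := by
            have : ∑ m, x0 m = (J'.card : ℝ) * c := by
              rw [← Finset.add_sum_erase _ _ (Finset.mem_univ j)]
              have e1 : x0 j = 0 := by rw [hx0']; simp
              have e2 : ∑ m ∈ Finset.univ.erase j, x0 m = ∑ m ∈ Finset.univ.erase j, x m :=
                Finset.sum_congr rfl (fun m hm => by
                  rw [hx0']; simp [(Finset.mem_erase.1 hm).1])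
              rw [e1, e2, herase, zero_add]
            rw [this]
            nlinarith [hx0 j]
          have hcard1 : (Finset.univ.filter (fun m => x1 m ≠ 0 ∧ x1 m ≠ c)).card ≤ N := by
            refine le_trans (Finset.card_le_card ?_) (hcard_erase j hjF)
            intro m hm
            rw [Finset.mem_filter] at hm
            have hmj : m ≠ j := by
              intro hmj
              apply hm.2.2
              rw [hmj, hx1]; simp
            have : x1 m = x m := by rw [hx1]; simp [hmj]
            rw [this] at hm
            exact Finset.mem_erase.2 ⟨hmj, by simp [hFdef, hm.2.1, hm.2.2]⟩
          have hcard0 : (Finset.univ.filter (fun m => x0 m ≠ 0 ∧ x0 m ≠ c)).card ≤ N := by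
            refine le_trans (Finset.card_le_card ?_) (hcard_erase j hjF)
            intro m hm
            rw [Finset.mem_filter] at hm
            have hmj : m ≠ j := by
              intro hmj
              apply hm.2.1
              rw [hmj, hx0']; simp
            have : x0 m = x m := by rw [hx0']; simp [hmj]
            rw [this] at hm
            exact Finset.mem_erase.2 ⟨hmj, by simp [hFdef, hm.2.1, hm.2.2]⟩
          have hmem1 : x1 ∈ K := ih x1
            (fun m => by rw [hx1]; by_cases h : m = j <;> simp [h, hc.le, hx0 m])
            (fun m => by rw [hx1]; by_cases h : m = j <;> simp [h, hxc m])
            hsum1 hcard1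
          have hmem0 : x0 ∈ K := ih x0
            (fun m => by rw [hx0']; by_cases h : m = j <;> simp [h, hx0 m])
            (fun m => by rw [hx0']; by_cases h : m = j <;> simp [h, hc.le, hxc m])
            hsum0 hcard0
          set w : ℝ := x j / c with hw
          have hw0 : 0 ≤ w := by positivity
          have hw1 : 0 ≤ 1 - w := by
            rw [hw, sub_nonneg, div_le_one hc]
            exact hxc j
          have hcombo := hconv hmem1 hmem0 hw0 hw1 (by ring)
          have hxeq : x = w • x1 + (1 - w) • x0 := by
            ext m
            rw [combo_apply]
            by_cases h1 : m = j
            · subst h1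
              have e1 : x1 m = c := by rw [hx1]; simp
              have e0 : x0 m = 0 := by rw [hx0']; simp
              rw [e1, e0, hw]
              field_simp
              ring
            · have e1 : x1 m = x m := by rw [hx1]; simp [h1]
              have e0 : x0 m = x m := by rw [hx0']; simp [h1]
              rw [e1, e0]
              ring
          rw [hxeq]
          exact hcombo

lemma coord_continuous {n : ℕ} (j : Fin n) :
    Continuous (fun x : EuclideanSpace ℝ (Fin n) => x j) :=
  (EuclideanSpace.proj (𝕜 := ℝ) j).continuous

lemma sumabs_continuous {n : ℕ} :
    Continuous (fun x : EuclideanSpace ℝ (Fin n) => ∑ j, |x j|) := by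
  apply continuous_finset_sum
  intro j _
  exact (coord_continuous j).abs

lemma Pcc_eq {n i : ℕ} (hi1 : 1 ≤ i) :
    Pcc n i = {x : EuclideanSpace ℝ (Fin n) | (∀ j, |x j| ≤ 1) ∧ ∑ j, |x j| ≤ (i:ℝ)} :=
  Set.ext (mem_Pcc_iff hi1)

lemma isClosed_Pcc {n i : ℕ} (hi1 : 1 ≤ i) : IsClosed (Pcc n i) := by
  rw [Pcc_eq hi1]
  have h1 : IsClosed {x : EuclideanSpace ℝ (Fin n) | ∀ j, |x j| ≤ 1} := by
    have : {x : EuclideanSpace ℝ (Fin n) | ∀ j, |x j| ≤ 1}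
        = ⋂ j, {x : EuclideanSpace ℝ (Fin n) | |x j| ≤ 1} := by
      ext x; simp
    rw [this]
    exact isClosed_iInter fun j =>
      IsClosed.preimage (coord_continuous j).abs isClosed_Iic
  have h2 : IsClosed {x : EuclideanSpace ℝ (Fin n) | ∑ j, |x j| ≤ (i:ℝ)} :=
    IsClosed.preimage sumabs_continuous isClosed_Iic
  exact h1.inter h2

lemma norm_le_sqrt_of_coords {n : ℕ} (x : EuclideanSpace ℝ (Fin n)) (h : ∀ j, |x j| ≤ 1) :
    ‖x‖ ≤ Real.sqrt n := by
  rw [EuclideanSpace.norm_eq]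
  apply Real.sqrt_le_sqrt
  calc ∑ j, ‖x j‖ ^ 2 ≤ ∑ j : Fin n, (1:ℝ) := by
        apply Finset.sum_le_sum
        intro j _
        have := h j
        rw [Real.norm_eq_abs]
        nlinarith [abs_nonneg (x j)]
  _ = (n : ℝ) := by simp

lemma isCompact_Pcc {n i : ℕ} (hi1 : 1 ≤ i) : IsCompact (Pcc n i) := by
  apply IsCompact.of_isClosed_subset (isCompact_closedBall (0 : EuclideanSpace ℝ (Fin n)) (Real.sqrt n))
    (isClosed_Pcc hi1)
  intro x hx
  rw [Metric.mem_closedBall, dist_zero_right]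
  exact norm_le_sqrt_of_coords x ((mem_Pcc_iff hi1 x).1 hx).1

lemma convex_Pcc {n i : ℕ} (hi1 : 1 ≤ i) : Convex ℝ (Pcc n i) := by
  rw [Pcc_eq hi1]
  rintro x ⟨hx1, hx2⟩ y ⟨hy1, hy2⟩ a b ha hb hab
  constructor
  · intro j
    rw [combo_apply]
    calc |a * x j + b * y j| ≤ |a * x j| + |b * y j| := abs_add_le _ _
    _ = a * |x j| + b * |y j| := by rw [abs_mul, abs_mul, abs_of_nonneg ha, abs_of_nonneg hb]
    _ ≤ a * 1 + b * 1 := by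
        apply add_le_add (mul_le_mul_of_nonneg_left (hx1 j) ha)
          (mul_le_mul_of_nonneg_left (hy1 j) hb)
    _ = 1 := by rw [mul_one, mul_one, hab]
  · calc ∑ j, |(a • x + b • y : EuclideanSpace ℝ (Fin n)) j|
        ≤ ∑ j, (a * |x j| + b * |y j|) := by
          apply Finset.sum_le_sum
          intro j _
          rw [combo_apply]
          calc |a * x j + b * y j| ≤ |a * x j| + |b * y j| := abs_add_le _ _
          _ = a * |x j| + b * |y j| := by
              rw [abs_mul, abs_mul, abs_of_nonneg ha, abs_of_nonneg hb]
    _ = a * ∑ j, |x j| + b * ∑ j, |y j| := by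
        rw [Finset.sum_add_distrib, Finset.mul_sum, Finset.mul_sum]
    _ ≤ a * i + b * i := by
        apply add_le_add (mul_le_mul_of_nonneg_left hx2 ha)
          (mul_le_mul_of_nonneg_left hy2 hb)
    _ = (i:ℝ) := by rw [← add_mul, hab, one_mul]

lemma zero_mem_interior_Pcc {n i : ℕ} (hi1 : 1 ≤ i) :
    (0 : EuclideanSpace ℝ (Fin n)) ∈ interior (Pcc n i) := by
  rw [mem_interior]
  refine ⟨{x : EuclideanSpace ℝ (Fin n) | ∑ j, |x j| < 1}, ?_, ?_, ?_⟩
  · intro x hx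
    have hx' : ∑ j, |x j| < 1 := hx
    rw [mem_Pcc_iff hi1]
    have hj : ∀ j, |x j| ≤ 1 := by
      intro j
      have h1 : |x j| ≤ ∑ k, |x k| :=
        Finset.single_le_sum (f := fun k => |x k|) (fun k _ => abs_nonneg _) (Finset.mem_univ j)
      linarith
    refine ⟨hj, ?_⟩
    have : (1:ℝ) ≤ i := by exact_mod_cast hi1
    linarith
  · exact IsOpen.preimage sumabs_continuous isOpen_Iio
  · show ∑ j : Fin n, |(0 : EuclideanSpace ℝ (Fin n)) j| < 1
    simp

lemma volume_Pcc_pos {n i : ℕ} (hi1 : 1 ≤ i) : 0 < volume (Pcc n i) :=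
  lt_of_lt_of_le (isOpen_interior.measure_pos volume ⟨_, zero_mem_interior_Pcc hi1⟩)
    (measure_mono interior_subset)

/-- For each admissible covering parameter `μ`, the scaled polytope `(1/2μ)·P_{n,i}`
is contained in the unconditional body `K`. -/
lemma smul_Pcc_mem_of_covSet {n i : ℕ} {K : Set (EuclideanSpace ℝ (Fin n))}
    (hconv : Convex ℝ K) (hu : StdUnconditional n K) (hi1 : 1 ≤ i) (hi2 : i ≤ n)
    {μ : ℝ} (hμ : μ ∈ covSet n i K) {w : EuclideanSpace ℝ (Fin n)} (hw : w ∈ Pcc n i) :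
    ((1/(2*μ)) • w : EuclideanSpace ℝ (Fin n)) ∈ K := by
  have hμ0 : 0 < μ := hμ.1
  set c : ℝ := 1/(2*μ) with hc
  have hc0 : 0 < c := by rw [hc]; positivity
  have hv : ∀ J : Finset (Fin n), J.card = i →
      (WithLp.toLp 2 (fun j => if j ∈ J then c else 0) : EuclideanSpace ℝ (Fin n)) ∈ K := by
    intro J hJ
    obtain ⟨y, hy, hybig⟩ := exists_large_coords hμ J hJ
    apply uncond_mono hconv hu hy
    intro j
    by_cases hj : j ∈ J
    · have h1 := hybig j hj
      have h2 : c ≤ |y j| := by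
        rw [hc, div_le_iff₀ (by positivity)] at *
        nlinarith
      simpa [hj, abs_of_pos hc0] using h2
    · simp [hj, abs_nonneg]
  have hwP := (mem_Pcc_iff hi1 w).1 hw
  set x : EuclideanSpace ℝ (Fin n) := WithLp.toLp 2 (fun j => c * |w j|) with hx
  have hxK : x ∈ K := by
    apply mem_of_boxsum_aux hconv hu hc0 hi2 hv
      ((Finset.univ.filter (fun j => x j ≠ 0 ∧ x j ≠ c)).card)
    · intro j; rw [hx]; positivity
    · intro j
      rw [hx]
      calc c * |w j| ≤ c * 1 := mul_le_mul_of_nonneg_left (hwP.1 j) hc0.le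
      _ = c := mul_one c
    · calc ∑ j, x j = c * ∑ j, |w j| := by rw [hx, Finset.mul_sum]
      _ ≤ c * i := mul_le_mul_of_nonneg_left hwP.2 hc0.le
      _ = i * c := mul_comm _ _
    · exact le_rfl
  apply uncond_mono hconv hu hxK
  intro j
  have : |(c • w : EuclideanSpace ℝ (Fin n)) j| = c * |w j| := by
    rw [PiLp.smul_apply, smul_eq_mul, abs_mul, abs_of_pos hc0]
  rw [this, hx]
  rw [abs_of_nonneg (by positivity : (0:ℝ) ≤ c * |w j|)]

lemma smul_covMin_Pcc_subset {n i : ℕ} {K : Set (EuclideanSpace ℝ (Fin n))}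
    (hKcpt : IsCompact K) (hconv : Convex ℝ K) (hu : StdUnconditional n K)
    (hi1 : 1 ≤ i) (hi2 : i ≤ n) (hne : (covSet n i K).Nonempty)
    (hpos : 0 < sInf (covSet n i K)) :
    (1/(2 * sInf (covSet n i K))) • Pcc n i ⊆ K := by
  intro z hz
  rw [Set.mem_smul_set] at hz
  obtain ⟨w, hw, rfl⟩ := hz
  obtain ⟨u, -, hulim, humem⟩ := exists_seq_tendsto_sInf hne (covSet_bddBelow _)
  have hKc : IsClosed K := hKcpt.isClosed
  have hlim : Filter.Tendsto (fun m => ((1/(2 * u m)) • w : EuclideanSpace ℝ (Fin n)))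
      Filter.atTop (nhds ((1/(2 * sInf (covSet n i K))) • w)) := by
    apply Filter.Tendsto.smul_const
    have hne2 : 2 * sInf (covSet n i K) ≠ 0 := by positivity
    have hcont : ContinuousAt (fun t : ℝ => 1/(2*t)) (sInf (covSet n i K)) := by
      apply ContinuousAt.div continuousAt_const
      · exact (continuous_const.mul continuous_id).continuousAt
      · exact hne2
    exact hcont.tendsto.comp hulim
  exact hKc.mem_of_tendsto hlim (Filter.Eventually.of_forall fun m =>
    smul_Pcc_mem_of_covSet hconv hu hi1 hi2 (humem m) hw)

/-- Volume rigidity: a convex set containing a closed convex set with interior point and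
with the same finite volume must be contained in it. -/
lemma subset_of_volume_eq {n : ℕ} {C K : Set (EuclideanSpace ℝ (Fin n))}
    (hCK : C ⊆ K) (hCclosed : IsClosed C) (hCconv : Convex ℝ C)
    (hKconv : Convex ℝ K) (hKmeas : MeasurableSet K)
    (hint : (interior C).Nonempty) (hvol : volume K = volume C) (hfin : volume K ≠ ⊤) :
    K ⊆ C := by
  intro x hx
  by_contra hxC
  obtain ⟨f, u, hfu, hux⟩ := geometric_hahn_banach_closed_point hCconv hCclosed hxC
  obtain ⟨b₀, hb₀⟩ := hint
  obtain ⟨ρ, hρ0, hρ⟩ := Metric.isOpen_iff.1 isOpen_interior b₀ hb₀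
  have hball : Metric.ball b₀ ρ ⊆ C := hρ.trans interior_subset
  set M : ℝ := |f x - f b₀| + ‖f‖ * ρ + 1 with hM
  have hM0 : 0 < M := by positivity
  have hd : 0 < f x - u := by linarith
  set s : ℝ := min 1 ((f x - u)/(2*M)) with hs
  have hs0 : 0 < s := lt_min one_pos (by positivity)
  have hs1 : s ≤ 1 := min_le_left _ _
  set U : Set (EuclideanSpace ℝ (Fin n)) :=
    Metric.ball ((1-s) • x + s • b₀) (s * ρ) with hU
  have hUK : U ⊆ K := by
    intro z hz
    rw [Metric.mem_ball, dist_eq_norm] at hz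
    set b : EuclideanSpace ℝ (Fin n) := b₀ + s⁻¹ • (z - ((1-s) • x + s • b₀)) with hb
    have hbball : b ∈ Metric.ball b₀ ρ := by
      rw [Metric.mem_ball, dist_eq_norm, hb]
      have : b₀ + s⁻¹ • (z - ((1-s) • x + s • b₀)) - b₀
          = s⁻¹ • (z - ((1-s) • x + s • b₀)) := by abel
      rw [this, norm_smul, Real.norm_eq_abs, abs_of_pos (by positivity)]
      rw [inv_mul_lt_iff₀ hs0]
      linarith [hz]
    have hzeq : z = (1-s) • x + s • b := by
      rw [hb, smul_add, smul_smul, mul_inv_cancel₀ (ne_of_gt hs0), one_smul]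
      abel
    rw [hzeq]
    exact hKconv hx (hCK (hball hbball)) (by linarith) hs0.le (by ring)
  have hUC : ∀ z ∈ U, u < f z := by
    intro z hz
    rw [Metric.mem_ball, dist_eq_norm] at hz
    have h1 : |f z - f ((1-s) • x + s • b₀)| ≤ ‖f‖ * (s * ρ) := by
      calc |f z - f ((1-s) • x + s • b₀)| = |f (z - ((1-s) • x + s • b₀))| := by
            rw [map_sub]
      _ = ‖f (z - ((1-s) • x + s • b₀))‖ := by rw [Real.norm_eq_abs]
      _ ≤ ‖f‖ * ‖z - ((1-s) • x + s • b₀)‖ := f.le_opNorm _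
      _ ≤ ‖f‖ * (s * ρ) := mul_le_mul_of_nonneg_left hz.le (norm_nonneg f)
    have h2 : f ((1-s) • x + s • b₀) = f x - s * (f x - f b₀) := by
      rw [map_add, f.map_smul, f.map_smul, smul_eq_mul, smul_eq_mul]
      ring
    have h3 : s * M ≤ (f x - u)/2 := by
      rcases min_cases 1 ((f x - u)/(2*M)) with ⟨hmin, hle⟩ | ⟨hmin, _⟩
      · have : s = 1 := by rw [hs, hmin]
        rw [this, one_mul]
        rw [le_div_iff₀ (by positivity : (0:ℝ) < 2*M)] at hle
        linarith
      · have heq : s = (f x - u)/(2*M) := by rw [hs, hmin]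
        have : s * M = (f x - u)/2 := by
          rw [heq]
          field_simp
        linarith
    have h4 : s * |f x - f b₀| + ‖f‖ * (s * ρ) ≤ s * M := by
      rw [hM]
      have : ‖f‖ * (s * ρ) = s * (‖f‖ * ρ) := by ring
      rw [this, ← mul_add]
      apply mul_le_mul_of_nonneg_left _ hs0.le
      linarith
    have h5 : f x - s * (f x - f b₀) - ‖f‖ * (s * ρ) ≤ f z := by
      have h6 := (abs_le.1 h1).1
      rw [h2] at h6
      linarith
    have h7 : s * (f x - f b₀) ≤ s * |f x - f b₀| :=
      mul_le_mul_of_nonneg_left (le_abs_self _) hs0.le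
    linarith
  have hdisj : U ⊆ K \ C := by
    intro z hz
    refine ⟨hUK hz, fun hzC => ?_⟩
    exact absurd (hfu z hzC) (not_lt.2 (hUC z hz).le)
  have hCfin : volume C ≠ ⊤ := by
    rw [← hvol]; exact hfin
  have hdiff : volume (K \ C) = 0 := by
    rw [measure_diff hCK hCclosed.measurableSet.nullMeasurableSet hCfin, hvol, tsub_self]
  have hUpos : 0 < volume U := Metric.measure_ball_pos volume _ (by positivity)
  have : volume U ≤ 0 := hdiff ▸ measure_mono hdisj
  exact absurd (lt_of_lt_of_le hUpos this) (lt_irrefl 0)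

/-- For a standard unconditional convex body `K` in `ℝⁿ` and `1 ≤ i ≤ n`, one has
`μ_i(K)ⁿ·vol(K) ≥ μ_i(P_{n,i})ⁿ·vol(P_{n,i})`, with equality if and only if
`K = (1/(2μ_i(K)))·P_{n,i}`. -/
theorem covMin_pow_mul_volume_ge_of_unconditional (n : ℕ) (hn : 1 ≤ n)
    (K : Set (EuclideanSpace ℝ (Fin n)))
    (hKcpt : IsCompact K) (hKconv : Convex ℝ K) (hKint : (interior K).Nonempty)
    (hKuncond : StdUnconditional n K) (i : ℕ) (hi1 : 1 ≤ i) (hi2 : i ≤ n) :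
    covMin n i K ^ n * (volume K).toReal ≥
      covMin n i (Pcc n i) ^ n * (volume (Pcc n i)).toReal ∧
    (covMin n i K ^ n * (volume K).toReal =
        covMin n i (Pcc n i) ^ n * (volume (Pcc n i)).toReal ↔
      K = (1 / (2 * covMin n i K)) • Pcc n i) := by
  -- setup
  obtain ⟨x₀, hx₀⟩ := hKint
  obtain ⟨r, hr0, hrball⟩ := Metric.isOpen_iff.1 isOpen_interior x₀ hx₀
  have hne : (covSet n i K).Nonempty :=
    ⟨_, exists_mem_covSet x₀ r hr0 (hrball.trans interior_subset)⟩
  have hpos : 0 < covMin n i K := covMin_pos hi1 hi2 hKcpt hne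
  set m : ℝ := covMin n i K with hm
  set c : ℝ := 1/(2*m) with hc
  have hc0 : 0 < c := by rw [hc]; positivity
  have hmP : covMin n i (Pcc n i) = 1/2 := covMin_Pcc hi1 hi2
  have hsub : c • Pcc n i ⊆ K := by
    rw [hc, hm]
    show (1/(2 * covMin n i K)) • Pcc n i ⊆ K
    rw [covMin_eq_sInf]
    exact smul_covMin_Pcc_subset hKcpt hKconv hKuncond hi1 hi2 hne
      (by rw [← covMin_eq_sInf]; exact hpos)
  -- volume computations
  have hKfin : volume K ≠ ⊤ := hKcpt.measure_lt_top.ne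
  have hPfin : volume (Pcc n i) ≠ ⊤ := (isCompact_Pcc hi1).measure_lt_top.ne
  have hCPvol : volume (c • Pcc n i)
      = ENNReal.ofReal (c ^ n) * volume (Pcc n i) := by
    rw [MeasureTheory.Measure.addHaar_smul volume c (Pcc n i)]
    congr 2
    rw [finrank_euclideanSpace_fin]
    exact abs_of_pos (pow_pos hc0 n)
  have hCPfin : volume (c • Pcc n i) ≠ ⊤ := by
    rw [hCPvol]
    exact ENNReal.mul_ne_top ENNReal.ofReal_ne_top hPfin
  have hCPtoReal : (volume (c • Pcc n i)).toReal = c ^ n * (volume (Pcc n i)).toReal := by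
    rw [hCPvol, ENNReal.toReal_mul, ENNReal.toReal_ofReal (pow_pos hc0 n).le]
  have hmc : m ^ n * c ^ n = (1/2) ^ n := by
    rw [← mul_pow]
    congr 1
    rw [hc]
    field_simp
  have hkey : m ^ n * (volume (c • Pcc n i)).toReal
      = (1/2) ^ n * (volume (Pcc n i)).toReal := by
    rw [hCPtoReal, ← mul_assoc, hmc]
  constructor
  · -- the inequality
    rw [hmP]
    have h1 : (volume (c • Pcc n i)).toReal ≤ (volume K).toReal :=
      ENNReal.toReal_mono hKfin (measure_mono hsub)
    calc (1/2 : ℝ) ^ n * (volume (Pcc n i)).toReal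
        = m ^ n * (volume (c • Pcc n i)).toReal := hkey.symm
    _ ≤ m ^ n * (volume K).toReal :=
        mul_le_mul_of_nonneg_left h1 (pow_pos hpos n).le
  · rw [hmP]
    constructor
    · -- equality implies K is the scaled polytope
      intro hE
      have h1 : m ^ n * (volume K).toReal = m ^ n * (volume (c • Pcc n i)).toReal := by
        rw [hkey, hE]
      have h2 : (volume K).toReal = (volume (c • Pcc n i)).toReal :=
        mul_left_cancel₀ (pow_pos hpos n).ne' h1
      have h3 : volume K = volume (c • Pcc n i) :=
        (ENNReal.toReal_eq_toReal_iff' hKfin hCPfin).1 h2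
      have hCPcpt : IsCompact (c • Pcc n i) := by
        rw [← Set.image_smul]
        exact (isCompact_Pcc hi1).image (continuous_const_smul c)
      have hCPconv : Convex ℝ (c • Pcc n i) := (convex_Pcc hi1).smul c
      have hCPint : (interior (c • Pcc n i)).Nonempty := by
        rw [interior_smul₀ hc0.ne']
        exact ⟨c • (0 : EuclideanSpace ℝ (Fin n)),
          Set.smul_mem_smul_set (zero_mem_interior_Pcc hi1)⟩
      have hKsub : K ⊆ c • Pcc n i :=
        subset_of_volume_eq hsub hCPcpt.isClosed hCPconv hKconv
          hKcpt.isClosed.measurableSet hCPint h3 hKfin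
      exact Set.Subset.antisymm hKsub hsub
    · -- the scaled polytope attains equality
      intro hKeq
      rw [hKeq]
      exact hkey
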